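/- Every strongly connected MSP has a cone vector: there exists d ∈ ℝ^n with d ≻ 0 (all components strictly positive) such that f'(μf) d ≤ d componentwise. -/

import Mathlib

open MvPolynomial Matrix

noncomputable def mspEval {n : ℕ} (F : Fin n → MvPolynomial (Fin n) ℝ)
    (x : Fin n → ℝ) : Fin n → ℝ :=
  fun i => eval x (F i)

def mspNonneg {n : ℕ} (F : Fin n → MvPolynomial (Fin n) ℝ) : Prop :=
  ∀ i m, 0 ≤ coeff m (F i)

/-- Clean: every variable is productive. -/
noncomputable def kleeneSeq {n : ℕ} (F : Fin n → MvPolynomial (Fin n) ℝ) (k : ℕ) :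
    Fin n → ℝ :=
  (mspEval F)^[k] 0

def mspClean {n : ℕ} (F : Fin n → MvPolynomial (Fin n) ℝ) : Prop :=
  ∀ i, ∃ k, 0 < kleeneSeq F k i

noncomputable def mspJac {n : ℕ} (F : Fin n → MvPolynomial (Fin n) ℝ)
    (x : Fin n → ℝ) : Matrix (Fin n) (Fin n) ℝ :=
  Matrix.of fun i j => eval x (pderiv j (F i))

/-- X_i depends directly on X_k. -/
def mspDep {n : ℕ} (F : Fin n → MvPolynomial (Fin n) ℝ) (i k : Fin n) : Prop :=
  pderiv k (F i) ≠ 0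

/-- Strongly connected: every variable depends on every variable. -/
def mspStronglyConnected {n : ℕ} (F : Fin n → MvPolynomial (Fin n) ℝ) : Prop :=
  ∀ i k, Relation.ReflTransGen (mspDep F) i k

section ConeVectorAux

open Finset Filter

variable {n : ℕ}

lemma myeval_nonneg (p : MvPolynomial (Fin n) ℝ)
    (hp : ∀ m, 0 ≤ coeff m p) {x : Fin n → ℝ} (hx : ∀ j, 0 ≤ x j) :
    0 ≤ eval x p := by
  rw [eval_eq]
  exact Finset.sum_nonneg fun m _ =>
    mul_nonneg (hp m) (Finset.prod_nonneg fun j _ => pow_nonneg (hx j) _)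

lemma myeval_mono (p : MvPolynomial (Fin n) ℝ) (hp : ∀ m, 0 ≤ coeff m p)
    {x y : Fin n → ℝ} (hx : ∀ j, 0 ≤ x j) (hxy : ∀ j, x j ≤ y j) :
    eval x p ≤ eval y p := by
  rw [eval_eq, eval_eq]
  apply Finset.sum_le_sum
  intro m _
  refine mul_le_mul_of_nonneg_left ?_ (hp m)
  exact Finset.prod_le_prod (fun j _ => pow_nonneg (hx j) _)
    (fun j _ => pow_le_pow_left₀ (hx j) (hxy j) _)

lemma myeval_pos (p : MvPolynomial (Fin n) ℝ) (hp : ∀ m, 0 ≤ coeff m p)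
    (hne : p ≠ 0) {x : Fin n → ℝ} (hx : ∀ j, 0 < x j) :
    0 < eval x p := by
  obtain ⟨m, hm⟩ := (support_nonempty (p := p)).2 hne
  rw [eval_eq]
  have h1 : 0 < coeff m p * ∏ i ∈ m.support, x i ^ m i :=
    mul_pos ((hp m).lt_of_ne (Ne.symm (mem_support_iff.1 hm)))
      (Finset.prod_pos fun i _ => pow_pos (hx i) _)
  exact lt_of_lt_of_le h1 (Finset.single_le_sum
    (fun v _ => mul_nonneg (hp v) (Finset.prod_nonneg fun j _ => pow_nonneg (hx j).le _)) hm)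

lemma mypderiv_coeff_nonneg (p : MvPolynomial (Fin n) ℝ) (hp : ∀ m, 0 ≤ coeff m p)
    (j : Fin n) (m : Fin n →₀ ℕ) : 0 ≤ coeff m (pderiv j p) := by
  have h := support_sum_monomial_coeff p
  calc (0:ℝ) ≤ coeff m (pderiv j (∑ v ∈ p.support, monomial v (coeff v p))) := by
        rw [map_sum]
        rw [coeff_sum]
        apply Finset.sum_nonneg
        intro v _
        rw [pderiv_monomial, coeff_monomial]
        split
        · exact mul_nonneg (hp v) (by positivity)
        · exact le_refl 0
    _ = coeff m (pderiv j p) := by rw [h]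

lemma prod_pow_update_succ (x : Fin n → ℝ) (e : Fin n → ℕ) (a : Fin n) :
    ∏ l, x l ^ (Function.update e a (e a + 1)) l = x a * ∏ l, x l ^ e l := by
  rw [Fintype.prod_eq_mul_prod_compl a, Fintype.prod_eq_mul_prod_compl a (fun l => x l ^ e l)]
  rw [Function.update_self, pow_succ']
  rw [mul_assoc]
  congr 1
  congr 1
  apply Finset.prod_congr rfl
  intro l hl
  simp only [Finset.mem_compl, Finset.mem_singleton] at hl
  rw [Function.update_of_ne hl]

lemma key_fn (x y : Fin n → ℝ) (hx : ∀ j, 0 ≤ x j) (hxy : ∀ j, x j ≤ y j) :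
    ∀ (D : ℕ) (g : Fin n → ℕ), (∑ j, g j) = D →
    (∏ j, x j ^ g j) +
      ∑ j, (g j : ℝ) * (∏ l, x l ^ (if l = j then g l - 1 else g l)) * (y j - x j)
      ≤ ∏ j, y j ^ g j := by
  intro D
  induction D with
  | zero =>
    intro g hg
    have hz : ∀ j, g j = 0 := by
      intro j
      have := Finset.sum_eq_zero_iff.mp hg
      exact this j (Finset.mem_univ j)
    simp [hz]
  | succ D ih =>
    intro g hg
    have hex : ∃ a, 0 < g a := by
      by_contra h
      push_neg at h
      have : ∀ j, g j = 0 := fun j => Nat.le_zero.mp (h j)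
      simp [this] at hg
    obtain ⟨a, ha⟩ := hex
    set g' : Fin n → ℕ := Function.update g a (g a - 1) with hg'def
    have hga : g a = g' a + 1 := by simp [hg'def]; omega
    have hgne : ∀ l, l ≠ a → g' l = g l := fun l hl => Function.update_of_ne hl _ _
    have hgupd : g = Function.update g' a (g' a + 1) := by
      funext l
      by_cases hl : l = a
      · subst hl; rw [Function.update_self]; omega
      · rw [Function.update_of_ne hl, hgne l hl]
    have hsum : ∑ j, g' j = D := by
      have h1 : ∑ j, g j = g a + ∑ j ∈ univ.erase a, g j :=
        (Finset.add_sum_erase univ g (mem_univ a)).symm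
      have h2 : ∑ j, g' j = g' a + ∑ j ∈ univ.erase a, g' j :=
        (Finset.add_sum_erase univ g' (mem_univ a)).symm
      have h3 : ∑ j ∈ univ.erase a, g' j = ∑ j ∈ univ.erase a, g j :=
        Finset.sum_congr rfl fun l hl => hgne l (Finset.ne_of_mem_erase hl)
      omega
    have IH := ih g' hsum
    -- abbreviations
    set X' := ∏ l, x l ^ g' l with hX'
    set Y' := ∏ l, y l ^ g' l with hY'
    have hX'0 : 0 ≤ X' := Finset.prod_nonneg fun l _ => pow_nonneg (hx l) _
    have hY'0 : 0 ≤ Y' := Finset.prod_nonneg fun l _ => pow_nonneg ((hx l).trans (hxy l)) _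
    have hXY' : X' ≤ Y' := Finset.prod_le_prod (fun l _ => pow_nonneg (hx l) _)
      (fun l _ => pow_le_pow_left₀ (hx l) (hxy l) _)
    have hXg : ∏ j, x j ^ g j = x a * X' := by
      rw [hgupd]; exact prod_pow_update_succ x g' a
    have hYg : ∏ j, y j ^ g j = y a * Y' := by
      rw [hgupd]; exact prod_pow_update_succ y g' a
    -- term-by-term relation
    have hterm : ∀ j, (g j : ℝ) * (∏ l, x l ^ (if l = j then g l - 1 else g l)) * (y j - x j)
        = x a * ((g' j : ℝ) * (∏ l, x l ^ (if l = j then g' l - 1 else g' l)) * (y j - x j))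
          + (if j = a then X' * (y a - x a) else 0) := by
      intro j
      by_cases hj : j = a
      · subst hj
        rw [if_pos rfl]
        have he1 : ∏ l, x l ^ (if l = j then g l - 1 else g l) = X' := by
          rw [hX']
          apply Finset.prod_congr rfl
          intro l _
          congr 1
          by_cases hl : l = j
          · subst hl; simp [hg'def]
          · rw [if_neg hl, hgne l hl]
        rw [he1]
        by_cases h0 : g' j = 0
        · have he4 : ∏ l, x l ^ (if l = j then g' l - 1 else g' l)
              = ∏ l, x l ^ (if l = j then g' l - 1 else g' l) := rfl
          rw [hga, h0]
          push_cast
          ring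
        · have hx'eq : X' = x j * ∏ l, x l ^ (if l = j then g' l - 1 else g' l) := by
            have he2 : ∏ l, x l ^ (if l = j then g' l - 1 else g' l)
                = ∏ l, x l ^ (Function.update g' j (g' j - 1)) l := by
              apply Finset.prod_congr rfl
              intro l _
              congr 1
              by_cases hl : l = j
              · subst hl; simp
              · simp [hl, Function.update_of_ne hl]
            have he5 : ∏ l, x l ^ g' l
                = ∏ l, x l ^ (Function.update (Function.update g' j (g' j - 1)) j
                  ((Function.update g' j (g' j - 1)) j + 1)) l := by
              apply Finset.prod_congr rfl
              intro l _
              congr 1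
              by_cases hl : l = j
              · subst hl; simp; omega
              · simp [Function.update_of_ne hl]
            rw [hX', he2, he5, prod_pow_update_succ x _ j]
          rw [hga, hx'eq]
          push_cast
          ring
      · -- j ≠ a
        have hgj : g j = g' j := (hgne j hj).symm
        have he3 : ∏ l, x l ^ (if l = j then g l - 1 else g l)
            = ∏ l, x l ^ (Function.update (fun l => if l = j then g' l - 1 else g' l) a
              ((fun l => if l = j then g' l - 1 else g' l) a + 1)) l := by
          apply Finset.prod_congr rfl
          intro l _
          congr 1
          by_cases hl : l = a
          · subst hl
            have hla : l ≠ j := fun h => hj h.symm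
            simp only [Function.update_self, if_neg hla]
            exact hga
          · by_cases hlj : l = j
            · subst hlj
              rw [Function.update_of_ne hl]
              simp only [if_pos rfl]
              rw [hgne l hl]
            · rw [Function.update_of_ne hl]
              simp only [if_neg hlj]
              rw [hgne l hl]
        rw [if_neg hj, add_zero, hgj, he3, prod_pow_update_succ]
        ring
    -- assemble
    have hsumsplit : ∑ j, (g j : ℝ) * (∏ l, x l ^ (if l = j then g l - 1 else g l)) * (y j - x j)
        = x a * (∑ j, (g' j : ℝ) * (∏ l, x l ^ (if l = j then g' l - 1 else g' l)) * (y j - x j))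
          + X' * (y a - x a) := by
      rw [Finset.sum_congr rfl (fun j _ => hterm j), Finset.sum_add_distrib,
        ← Finset.mul_sum]
      congr 1
      simp
    rw [hXg, hYg, hsumsplit]
    have step1 : x a * X' + (x a * (∑ j, (g' j : ℝ) * (∏ l, x l ^ (if l = j then g' l - 1 else g' l)) * (y j - x j)) + X' * (y a - x a))
        ≤ x a * Y' + X' * (y a - x a) := by
      have := mul_le_mul_of_nonneg_left IH (hx a)
      nlinarith [this]
    have step2 : x a * Y' + X' * (y a - x a) ≤ x a * Y' + Y' * (y a - x a) := by
      have h1 : 0 ≤ y a - x a := sub_nonneg.mpr (hxy a)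
      nlinarith
    have step3 : x a * Y' + Y' * (y a - x a) = y a * Y' := by ring
    linarith

lemma eval_monomial' (x : Fin n → ℝ) (m : Fin n →₀ ℕ) (c : ℝ) :
    eval x (monomial m c) = c * ∏ j, x j ^ m j := by
  rw [eval_monomial, Finsupp.prod_pow]

lemma eval_pderiv_monomial (x : Fin n → ℝ) (m : Fin n →₀ ℕ) (c : ℝ) (j : Fin n) :
    eval x (pderiv j (monomial m c))
      = c * ((m j : ℝ) * ∏ l, x l ^ (if l = j then m l - 1 else m l)) := by
  rw [pderiv_monomial, eval_monomial', ]
  have : ∀ l, (m - Finsupp.single j 1 : Fin n →₀ ℕ) l = if l = j then m l - 1 else m l := by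
    intro l
    rw [Finsupp.tsub_apply, Finsupp.single_apply]
    by_cases hl : l = j
    · subst hl; simp
    · rw [if_neg hl, if_neg (fun h => hl h.symm)]; omega
  rw [Finset.prod_congr rfl (fun l _ => by rw [this l])]
  ring

lemma taylor_lower (p : MvPolynomial (Fin n) ℝ) (hp : ∀ m, 0 ≤ coeff m p)
    {x y : Fin n → ℝ} (hx : ∀ j, 0 ≤ x j) (hxy : ∀ j, x j ≤ y j) :
    eval x p + ∑ j, eval x (pderiv j p) * (y j - x j) ≤ eval y p := by
  set T : MvPolynomial (Fin n) ℝ → Prop := fun q =>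
    eval x q + ∑ j, eval x (pderiv j q) * (y j - x j) ≤ eval y q with hT
  have hTadd : ∀ q r, T q → T r → T (q + r) := by
    intro q r hq hr
    simp only [hT, map_add, add_mul, Finset.sum_add_distrib] at *
    linarith
  have hT0 : T 0 := by simp [hT]
  have hTmono : ∀ (m : Fin n →₀ ℕ) (c : ℝ), 0 ≤ c → T (monomial m c) := by
    intro m c hc
    simp only [hT, eval_monomial', eval_pderiv_monomial]
    have hk := key_fn x y hx hxy (∑ j, m j) (fun j => m j) rfl
    have := mul_le_mul_of_nonneg_left hk hc
    calc c * ∏ j, x j ^ m j + ∑ j, c * ((m j : ℝ) * ∏ l, x l ^ (if l = j then m l - 1 else m l)) * (y j - x j)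
        = c * ((∏ j, x j ^ m j) + ∑ j, (m j : ℝ) * (∏ l, x l ^ (if l = j then m l - 1 else m l)) * (y j - x j)) := by
          rw [mul_add, Finset.mul_sum]
          congr 1
          apply Finset.sum_congr rfl
          intro j _
          ring
      _ ≤ c * ∏ j, y j ^ m j := this
  have : T (∑ v ∈ p.support, monomial v (coeff v p)) :=
    Finset.sum_induction _ T hTadd hT0 (fun v _ => hTmono v _ (hp v))
  rwa [support_sum_monomial_coeff] at this

lemma kleene_step (F : Fin n → MvPolynomial (Fin n) ℝ) (k : ℕ) :
    kleeneSeq F (k+1) = mspEval F (kleeneSeq F k) := by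
  unfold kleeneSeq
  rw [Function.iterate_succ_apply']

lemma least_prefixed (F : Fin n → MvPolynomial (Fin n) ℝ) (hF : mspNonneg F)
    (μ : Fin n → ℝ)
    (hleast : ∀ y : Fin n → ℝ, 0 ≤ y → mspEval F y = y → μ ≤ y)
    {b : Fin n → ℝ} (hb0 : 0 ≤ b) (hbe : mspEval F b ≤ b) : μ ≤ b := by
  have hbound : ∀ k, 0 ≤ kleeneSeq F k ∧ kleeneSeq F k ≤ b := by
    intro k
    induction k with
    | zero => exact ⟨le_refl 0, hb0⟩
    | succ k ih =>
      rw [kleene_step]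
      constructor
      · intro i
        exact myeval_nonneg (F i) (hF i) (fun j => ih.1 j)
      · intro i
        exact le_trans (myeval_mono (F i) (hF i) (fun j => ih.1 j) (fun j => ih.2 j)) (hbe i)
  have hmono : ∀ k, kleeneSeq F k ≤ kleeneSeq F (k+1) := by
    intro k
    induction k with
    | zero => intro i; exact (hbound 1).1 i
    | succ k ih =>
      rw [kleene_step, kleene_step]
      intro i
      exact myeval_mono (F i) (hF i) (fun j => (hbound k).1 j) (fun j => ih j)
  set y : Fin n → ℝ := fun i => ⨆ k, kleeneSeq F k i with hy
  have hmono' : ∀ i, Monotone fun k => kleeneSeq F k i :=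
    fun i => monotone_nat_of_le_succ (fun k => hmono k i)
  have hbdd : ∀ i, BddAbove (Set.range fun k => kleeneSeq F k i) := by
    intro i
    refine ⟨b i, ?_⟩
    rintro t ⟨k, rfl⟩
    exact (hbound k).2 i
  have htend : ∀ i, Tendsto (fun k => kleeneSeq F k i) atTop (nhds (y i)) :=
    fun i => tendsto_atTop_ciSup (hmono' i) (hbdd i)
  have htendf : Tendsto (fun k => kleeneSeq F k) atTop (nhds y) :=
    tendsto_pi_nhds.2 htend
  have hyfix : mspEval F y = y := by
    funext i
    have h1 : Tendsto (fun k => eval (kleeneSeq F k) (F i)) atTop (nhds (eval y (F i))) :=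
      ((F i).continuous_eval.tendsto y).comp htendf
    have h2 : Tendsto (fun k => kleeneSeq F (k+1) i) atTop (nhds (y i)) :=
      (htend i).comp (tendsto_add_atTop_nat 1)
    have h3 : (fun k => kleeneSeq F (k+1) i) = fun k => eval (kleeneSeq F k) (F i) :=
      funext fun k => by rw [kleene_step]; rfl
    rw [h3] at h2
    exact tendsto_nhds_unique h1 h2
  have hy0 : 0 ≤ y := by
    intro i
    refine le_trans ?_ (le_ciSup (hbdd i) 0)
    simp [kleeneSeq]
  have hyb : y ≤ b := fun i => ciSup_le (fun k => (hbound k).2 i)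
  exact le_trans (hleast y hy0 hyfix) hyb

lemma pow_entries_nonneg (A : Matrix (Fin n) (Fin n) ℝ) (hA : ∀ i k, 0 ≤ A i k) :
    ∀ m i k, 0 ≤ (A ^ m) i k := by
  intro m
  induction m with
  | zero => intro i k; simp [Matrix.one_apply]; split <;> norm_num
  | succ m ih =>
    intro i k
    rw [pow_succ, Matrix.mul_apply]
    exact Finset.sum_nonneg fun l _ => mul_nonneg (ih i l) (hA l k)

lemma exists_pow_pos (A : Matrix (Fin n) (Fin n) ℝ) (hA : ∀ i k, 0 ≤ A i k)
    {i k : Fin n} (h : Relation.ReflTransGen (fun a b => 0 < A a b) i k) :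
    ∃ m, 0 < (A ^ m) i k := by
  induction h with
  | refl => exact ⟨0, by simp [Matrix.one_apply]⟩
  | @tail b c hab hbc ih =>
    obtain ⟨m, hm⟩ := ih
    refine ⟨m + 1, ?_⟩
    rw [pow_succ, Matrix.mul_apply]
    have h1 : 0 < (A ^ m) i b * A b c := mul_pos hm hbc
    exact lt_of_lt_of_le h1 (Finset.single_le_sum
      (fun l _ => mul_nonneg (pow_entries_nonneg A hA m i l) (hA l c)) (Finset.mem_univ b))

lemma exists_pos_comm_matrix (A : Matrix (Fin n) (Fin n) ℝ) (hA : ∀ i k, 0 ≤ A i k)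
    (hirr : ∀ i k, Relation.ReflTransGen (fun a b => 0 < A a b) i k) :
    ∃ B : Matrix (Fin n) (Fin n) ℝ, (∀ i k, 0 < B i k) ∧ A * B = B * A := by
  have hch : ∀ p : Fin n × Fin n, ∃ m, 0 < (A ^ m) p.1 p.2 :=
    fun p => exists_pow_pos A hA (hirr p.1 p.2)
  choose g hg using hch
  set N := Finset.univ.sup g with hN
  refine ⟨∑ m ∈ Finset.range (N + 1), A ^ m, ?_, ?_⟩
  · intro i k
    have hgN : g (i, k) ∈ Finset.range (N + 1) := by
      rw [Finset.mem_range]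
      exact Nat.lt_succ_of_le (Finset.le_sup (Finset.mem_univ (i, k)))
    have h1 : 0 < (A ^ g (i, k)) i k := hg (i, k)
    have h2 : ∀ m ∈ Finset.range (N + 1), 0 ≤ (A ^ m) i k :=
      fun m _ => pow_entries_nonneg A hA m i k
    calc (0:ℝ) < (A ^ g (i, k)) i k := h1
      _ ≤ ∑ m ∈ Finset.range (N + 1), (A ^ m) i k := Finset.single_le_sum h2 hgN
      _ = (∑ m ∈ Finset.range (N + 1), A ^ m) i k := by
          rw [Matrix.sum_apply]
  · rw [Finset.mul_sum, Finset.sum_mul]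
    apply Finset.sum_congr rfl
    intro m _
    rw [← pow_succ, ← pow_succ']

lemma continuousOn_finset_inf' {α ι : Type*} [TopologicalSpace α] {S : Set α}
    (s : Finset ι) (hs : s.Nonempty) (ψ : ι → α → ℝ)
    (h : ∀ i, ContinuousOn (ψ i) S) :
    ContinuousOn (fun x => s.inf' hs (fun i => ψ i x)) S := by
  induction hs using Finset.Nonempty.cons_induction with
  | singleton a =>
    have : (fun x => ({a} : Finset ι).inf' (Finset.singleton_nonempty a) (fun i => ψ i x)) = ψ a := by
      funext x
      exact Finset.inf'_singleton (f := fun i => ψ i x)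
    rw [this]
    exact h a
  | cons a s ha hsne ih =>
    have he : (fun x => (Finset.cons a s ha).inf' (Finset.cons_nonempty ha) (fun i => ψ i x))
        = fun x => (ψ a x) ⊓ (s.inf' hsne (fun i => ψ i x)) :=
      funext fun x => Finset.inf'_cons (H := hsne) (fun i => ψ i x)
    rw [he]
    exact ContinuousOn.inf (h a) ih

lemma mulVec_continuous' (M : Matrix (Fin n) (Fin n) ℝ) (i : Fin n) :
    Continuous fun x : Fin n → ℝ => (M *ᵥ x) i := by
  simp only [mulVec, dotProduct]
  exact continuous_finset_sum _ fun k _ => (continuous_const.mul (continuous_apply k))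

lemma perron (hn : 0 < n) (A B : Matrix (Fin n) (Fin n) ℝ)
    (hA : ∀ i k, 0 ≤ A i k) (hB : ∀ i k, 0 < B i k)
    (hcomm : A * B = B * A) :
    ∃ (t : ℝ) (z : Fin n → ℝ), 0 ≤ t ∧ (∀ i, 0 < z i) ∧ A *ᵥ z = t • z := by
  haveI : Nonempty (Fin n) := ⟨⟨0, hn⟩⟩
  set S := stdSimplex ℝ (Fin n) with hS
  have hSne : S.Nonempty := ⟨Pi.single ⟨0, hn⟩ 1, single_mem_stdSimplex ℝ _⟩
  have hBx : ∀ x ∈ S, ∀ i, 0 < (B *ᵥ x) i := by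
    intro x hx i
    obtain ⟨hx0, hx1⟩ := hx
    have : ∃ k, 0 < x k := by
      by_contra h
      push_neg at h
      have : ∀ k, x k = 0 := fun k => le_antisymm (h k) (hx0 k)
      simp [this] at hx1
    obtain ⟨k, hk⟩ := this
    simp only [mulVec, dotProduct]
    apply Finset.sum_pos'
    · intro l _
      exact mul_nonneg (hB i l).le (hx0 l)
    · exact ⟨k, Finset.mem_univ k, mul_pos (hB i k) hk⟩
  set ψ : Fin n → (Fin n → ℝ) → ℝ :=
    fun i x => (A *ᵥ (B *ᵥ x)) i / (B *ᵥ x) i with hψ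
  set φ : (Fin n → ℝ) → ℝ := fun x => Finset.univ.inf' Finset.univ_nonempty (fun i => ψ i x)
    with hφ
  have hφcont : ContinuousOn φ S := by
    apply continuousOn_finset_inf'
    intro i _
    apply ContinuousOn.div
    · exact ((mulVec_continuous' A i).comp
        (continuous_pi (fun j => mulVec_continuous' B j))).continuousOn
    · exact (mulVec_continuous' B i).continuousOn
    · intro x hx; exact (hBx x hx i).ne'
  obtain ⟨x₀, hx₀S, hmax⟩ := (isCompact_stdSimplex ℝ (Fin n)).exists_isMaxOn hSne hφcont
  set z := B *ᵥ x₀ with hzdef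
  have hz : ∀ i, 0 < z i := hBx x₀ hx₀S
  set ρ := φ x₀ with hρ
  have hρz : ∀ i, ρ * z i ≤ (A *ᵥ z) i := by
    intro i
    have h1 : ρ ≤ ψ i x₀ := Finset.inf'_le _ (Finset.mem_univ i)
    rw [hψ] at h1
    exact (le_div_iff₀ (hz i)).mp h1
  have hAz0 : ∀ i, 0 ≤ (A *ᵥ z) i := by
    intro i
    simp only [mulVec, dotProduct]
    exact Finset.sum_nonneg fun k _ => mul_nonneg (hA i k) (hz k).le
  have hρ0 : 0 ≤ ρ := by
    rw [hρ, hφ]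
    apply Finset.le_inf'
    intro i _
    exact div_nonneg (hAz0 i) (hz i).le
  refine ⟨ρ, z, hρ0, hz, ?_⟩
  by_contra hne
  set u := A *ᵥ z - ρ • z with hu
  have hu0 : ∀ i, 0 ≤ u i := fun i => sub_nonneg.2 (hρz i)
  have hune : u ≠ 0 := fun h => hne (by
    have := sub_eq_zero.1 (by rw [← hu, h])
    exact this)
  obtain ⟨k₀, hk₀⟩ : ∃ k, 0 < u k := by
    by_contra h
    push_neg at h
    exact hune (funext fun k => le_antisymm (h k) (hu0 k))
  set w := B *ᵥ z with hw
  have hwpos : ∀ i, 0 < w i := by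
    intro i
    show 0 < (B *ᵥ z) i
    simp only [mulVec, dotProduct]
    exact Finset.sum_pos (fun k _ => mul_pos (hB i k) (hz k)) Finset.univ_nonempty
  have hkey : ∀ i, ρ * w i < (A *ᵥ w) i := by
    intro i
    have hBu : 0 < (B *ᵥ u) i := by
      simp only [mulVec, dotProduct]
      apply Finset.sum_pos'
      · intro l _; exact mul_nonneg (hB i l).le (hu0 l)
      · exact ⟨k₀, Finset.mem_univ k₀, mul_pos (hB i k₀) hk₀⟩
    have hABz : A *ᵥ w = B *ᵥ (A *ᵥ z) := by
      rw [hw, mulVec_mulVec, hcomm, ← mulVec_mulVec]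
    have : (B *ᵥ u) i = (A *ᵥ w) i - ρ * w i := by
      rw [hu, mulVec_sub, mulVec_smul, hABz, hw]
      simp [Pi.sub_apply, Pi.smul_apply, smul_eq_mul]
    linarith
  -- normalize z into the simplex
  set c := (∑ k, z k)⁻¹ with hc
  have hzsum : 0 < ∑ k, z k := Finset.sum_pos (fun k _ => hz k) Finset.univ_nonempty
  have hcpos : 0 < c := inv_pos.2 hzsum
  set x₁ := c • z with hx₁
  have hx₁S : x₁ ∈ S := by
    constructor
    · intro i; exact mul_nonneg hcpos.le (hz i).le
    · rw [hx₁]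
      simp only [Pi.smul_apply, smul_eq_mul]
      rw [← Finset.mul_sum, hc]
      exact inv_mul_cancel₀ hzsum.ne'
  have hcontr : ρ < φ x₁ := by
    rw [hφ, Finset.lt_inf'_iff]
    intro i _
    have hBx₁ : B *ᵥ x₁ = c • w := by rw [hx₁, mulVec_smul, hw]
    have hAx₁ : A *ᵥ (B *ᵥ x₁) = c • (A *ᵥ w) := by rw [hBx₁, mulVec_smul]
    show ρ < (A *ᵥ (B *ᵥ x₁)) i / (B *ᵥ x₁) i
    rw [hAx₁, hBx₁, Pi.smul_apply, Pi.smul_apply, smul_eq_mul, smul_eq_mul,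
      mul_div_mul_left _ _ hcpos.ne']
    exact (lt_div_iff₀ (hwpos i)).2 (hkey i)
  exact absurd (hmax hx₁S) (not_le.2 hcontr)

end ConeVectorAux

/-- every strongly connected MSP has a cone vector. -/
theorem scMSP_has_cone_vector {n : ℕ} (F : Fin n → MvPolynomial (Fin n) ℝ)
    (hF : mspNonneg F) (hclean : mspClean F) (hsc : mspStronglyConnected F)
    (μ : Fin n → ℝ)
    (hμ0 : 0 ≤ μ) (hfix : mspEval F μ = μ)
    (hleast : ∀ y : Fin n → ℝ, 0 ≤ y → mspEval F y = y → μ ≤ y) :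
    ∃ d : Fin n → ℝ, (∀ j, 0 < d j) ∧ mspJac F μ *ᵥ d ≤ d := by
  rcases Nat.eq_zero_or_pos n with hn | hn
  · subst hn
    exact ⟨fun _ => 1, fun j => j.elim0, fun j => j.elim0⟩
  -- kleene sequence bounds below μ
  have hbound : ∀ k, 0 ≤ kleeneSeq F k ∧ kleeneSeq F k ≤ μ := by
    intro k
    induction k with
    | zero => exact ⟨le_refl 0, hμ0⟩
    | succ k ih =>
      rw [kleene_step]
      constructor
      · intro i
        exact myeval_nonneg (F i) (hF i) (fun j => ih.1 j)
      · intro i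
        calc eval (kleeneSeq F k) (F i) ≤ eval μ (F i) :=
              myeval_mono (F i) (hF i) (fun j => ih.1 j) (fun j => ih.2 j)
          _ = μ i := congrFun hfix i
  have hμpos : ∀ i, 0 < μ i := by
    intro i
    obtain ⟨k, hk⟩ := hclean i
    exact lt_of_lt_of_le hk ((hbound k).2 i)
  set A := mspJac F μ with hAdef
  have hAev : ∀ i k, A i k = eval μ (pderiv k (F i)) := fun i k => rfl
  have hA0 : ∀ i k, 0 ≤ A i k := fun i k =>
    myeval_nonneg _ (mypderiv_coeff_nonneg (F i) (hF i) k) (fun j => hμ0 j)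
  have hdep : ∀ i k, mspDep F i k → 0 < A i k := fun i k h =>
    myeval_pos _ (mypderiv_coeff_nonneg (F i) (hF i) k) h hμpos
  have hirr : ∀ i k, Relation.ReflTransGen (fun a b => 0 < A a b) i k :=
    fun i k => Relation.ReflTransGen.mono (fun a b hab => hdep a b hab) i k (hsc i k)
  obtain ⟨B, hBpos, hComm⟩ := exists_pos_comm_matrix A hA0 hirr
  obtain ⟨ρ, z, hρ0, hzpos, hAz⟩ := perron hn A B hA0 hBpos hComm
  by_cases hρ1 : ρ ≤ 1
  · refine ⟨z, hzpos, ?_⟩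
    rw [hAz]
    intro i
    rw [Pi.smul_apply, smul_eq_mul]
    calc ρ * z i ≤ 1 * z i := mul_le_mul_of_nonneg_right hρ1 (hzpos i).le
      _ = z i := one_mul _
  · push_neg at hρ1
    exfalso
    set G : Fin n → ℝ → ℝ :=
      fun i ε => ∑ j, eval (fun l => μ l - ε * z l) (pderiv j (F i)) * z j with hG
    have hGcont : ∀ i, Continuous (G i) := by
      intro i
      apply continuous_finset_sum
      intro j _
      exact ((MvPolynomial.continuous_eval _).comp
        (continuous_pi fun l =>
          continuous_const.sub (continuous_id.mul continuous_const))).mul continuous_const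
    have hG0 : ∀ i, G i 0 = ρ * z i := by
      intro i
      have h1 : (fun l => μ l - (0:ℝ) * z l) = μ := by funext l; ring
      have h2 : G i 0 = (A *ᵥ z) i := by
        rw [hG]
        simp only [h1]
        rw [mulVec, dotProduct]
        rfl
      rw [h2, hAz, Pi.smul_apply, smul_eq_mul]
    have hev1 : ∀ i, ∀ᶠ ε in nhds (0:ℝ), z i < G i ε := by
      intro i
      have hlt : z i < G i 0 := by
        rw [hG0 i]
        nlinarith [hzpos i]
      exact (hGcont i).continuousAt.eventually_const_lt hlt
    have hev2 : ∀ i, ∀ᶠ ε in nhds (0:ℝ), ε * z i < μ i := by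
      intro i
      have hc : Continuous fun ε : ℝ => ε * z i := continuous_id.mul continuous_const
      have h0 : (0:ℝ) * z i < μ i := by simpa using hμpos i
      exact hc.continuousAt.eventually_lt_const h0
    have hall : ∀ᶠ ε in nhds (0:ℝ), (∀ i, z i < G i ε) ∧ (∀ i, ε * z i < μ i) :=
      (Filter.eventually_all.2 hev1).and (Filter.eventually_all.2 hev2)
    obtain ⟨ε, ⟨hεG, hεμ⟩, hεpos⟩ :=
      ((hall.filter_mono nhdsWithin_le_nhds).and
        (eventually_mem_nhdsWithin (s := Set.Ioi (0:ℝ)))).exists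
    have hεpos' : (0:ℝ) < ε := hεpos
    set x : Fin n → ℝ := fun l => μ l - ε * z l with hx
    have hx0 : ∀ l, 0 ≤ x l := by
      intro l
      have := hεμ l
      simp only [hx]
      linarith
    have hxμ : ∀ l, x l ≤ μ l := by
      intro l
      simp only [hx]
      nlinarith [hzpos l]
    have hpre : mspEval F x ≤ x := by
      intro i
      have ht := taylor_lower (F i) (hF i) hx0 hxμ
      have hsum : ∑ j, eval x (pderiv j (F i)) * (μ j - x j) = ε * G i ε := by
        rw [hG, Finset.mul_sum]
        apply Finset.sum_congr rfl
        intro j _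
        have hμx : μ j - x j = ε * z j := by simp only [hx]; ring
        rw [hμx]
        ring
      rw [hsum] at ht
      have hevμ : eval μ (F i) = μ i := congrFun hfix i
      rw [hevμ] at ht
      have hGz : ε * z i ≤ ε * G i ε :=
        mul_le_mul_of_nonneg_left (hεG i).le hεpos'.le
      show eval x (F i) ≤ x i
      simp only [hx]
      linarith
    have hμx := least_prefixed F hF μ hleast (fun l => hx0 l) hpre
    have hcontr := hμx ⟨0, hn⟩
    simp only [hx] at hcontr
    nlinarith [hzpos ⟨0, hn⟩]
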